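/- Let p ≥ 5 be a prime with p ≡ 2 (mod 3). Let θ ∈ ℚ_p and q ∈ ℕ satisfy |θ−1|_p < |(q:ℚ_p)|_p < 1 and (θ−1)(1−θ−q) ≠ 0, and let f(x) = ((θx+q−1)/(x+θ+q−2))³ with x⁽∞⁾ = 2−θ−q. Then for every x ∈ ℚ_p with |x − x⁽∞⁾|_p = |q|_p·|θ−1|_p one has |f(x) − 1|_p = 1 > |q|_p; that is, f maps the sphere 𝒜∞⁽²⁾ = {x : |x − x⁽∞⁾|_p = |q|_p|θ−1|_p} into 𝒜₁ = {x : |x−1|_p > |q|_p}. -/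

import Mathlib

lemma key_unit_lemma (p : ℕ) [Fact (Nat.Prime p)] (hp5 : 5 ≤ p) (hp3 : p % 3 = 2)
    (u : ℚ_[p]) (hu : ‖u‖ = 1) : ‖u ^ 2 + 3 * u + 3‖ = 1 := by
  set v : ℤ_[p] := ⟨u, hu.le⟩ with hv
  have hvu : ((v : ℤ_[p]) : ℚ_[p]) = u := rfl
  have h3c : (((3 : ℤ_[p])) : ℚ_[p]) = 3 := by norm_cast
  have hcoe : (((v ^ 2 + 3 * v + 3 : ℤ_[p])) : ℚ_[p]) = u ^ 2 + 3 * u + 3 := by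
    push_cast [hvu, h3c]; ring
  rw [← hcoe, PadicInt.padic_norm_e_of_padicInt]
  have hle : ‖v ^ 2 + 3 * v + 3‖ ≤ 1 := PadicInt.norm_le_one _
  rcases lt_or_eq_of_le hle with hlt | heq
  · exfalso
    have h0 : PadicInt.toZMod (v ^ 2 + 3 * v + 3) = 0 := by
      rw [← RingHom.mem_ker, PadicInt.ker_toZMod, PadicInt.maximalIdeal_eq_span_p,
        Ideal.mem_span_singleton]
      exact (PadicInt.norm_lt_one_iff_dvd _).mp hlt
    set w : ZMod p := PadicInt.toZMod v with hw
    have h0' : w ^ 2 + 3 * w + 3 = 0 := by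
      have h3z : PadicInt.toZMod (3 : ℤ_[p]) = 3 := by
        have : ((3:ℕ) : ℤ_[p]) = 3 := by push_cast; ring
        rw [← this, map_natCast]; push_cast; ring
      rw [map_add, map_add, map_mul, map_pow, h3z] at h0
      exact h0
    have h3ne : (3 : ZMod p) ≠ 0 := by
      have h' : ((3:ℕ) : ZMod p) ≠ 0 := by
        rw [Ne, ZMod.natCast_eq_zero_iff]
        intro h; have := Nat.le_of_dvd (by norm_num) h; omega
      simpa using h'
    have hcube : (w + 1) ^ 3 = 1 := by linear_combination (w + 1 - 1) * h0'
    have hwne1 : w + 1 ≠ 1 := by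
      intro h
      have hw0 : w = 0 := by linear_combination h
      rw [hw0] at h0'; simp at h0'
      exact h3ne (by linear_combination h0')
    have hne0 : w + 1 ≠ 0 := by
      intro h; rw [h] at hcube; simp at hcube
    have hord : orderOf (w + 1) ∣ 3 := orderOf_dvd_of_pow_eq_one hcube
    have hord3 : orderOf (w + 1) = 3 := by
      rcases (Nat.prime_three).eq_one_or_self_of_dvd _ hord with h | h
      · exact absurd (orderOf_eq_one_iff.mp h) hwne1
      · exact h
    have hpow : (w + 1) ^ (p - 1) = 1 := ZMod.pow_card_sub_one_eq_one hne0
    have hdvd : orderOf (w + 1) ∣ p - 1 := orderOf_dvd_of_pow_eq_one hpow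
    rw [hord3] at hdvd
    omega
  · exact heq

/-- the Potts–Bethe mapping sends the sphere
`𝒜∞⁽²⁾ = {x : ‖x-x⁽∞⁾‖ = ‖q‖·‖θ-1‖}` (with `x⁽∞⁾ = 2-θ-q`) into
`𝒜₁ = {x : ‖x-1‖ > ‖q‖}`: indeed `‖f(x)-1‖ = 1 > ‖q‖` there. -/

theorem potts_bethe_maps_Ainf2_into_A1 (p : ℕ) [Fact (Nat.Prime p)]
    (hp5 : 5 ≤ p) (hp3 : p % 3 = 2) (θ : ℚ_[p]) (q : ℕ)
    (hθq : ‖θ - 1‖ < ‖(q : ℚ_[p])‖) (hq : ‖(q : ℚ_[p])‖ < 1)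
    (hne : (θ - 1) * (1 - θ - (q : ℚ_[p])) ≠ 0) :
    ∀ x : ℚ_[p], ‖x - (2 - θ - (q : ℚ_[p]))‖ = ‖(q : ℚ_[p])‖ * ‖θ - 1‖ →
      ‖((θ * x + (q : ℚ_[p]) - 1) / (x + θ + (q : ℚ_[p]) - 2)) ^ 3 - 1‖ = 1 ∧
      ‖(q : ℚ_[p])‖ < 1 := by
  intro x hx
  refine ⟨?_, hq⟩
  have ht0 : θ - 1 ≠ 0 := fun h => hne (by rw [h, zero_mul])
  have htpos : (0:ℝ) < ‖θ - 1‖ := norm_pos_iff.mpr ht0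
  have hqpos : (0:ℝ) < ‖(q : ℚ_[p])‖ := lt_trans htpos hθq
  set Q : ℚ_[p] := (q : ℚ_[p]) with hQ
  set y : ℚ_[p] := x + θ + Q - 2 with hy
  have hxy : x - (2 - θ - Q) = y := by rw [hy]; ring
  have hny : ‖y‖ = ‖Q‖ * ‖θ - 1‖ := by rw [← hxy]; exact hx
  have hy0 : y ≠ 0 := by
    intro h
    rw [h, norm_zero] at hny
    exact absurd hny.symm (ne_of_gt (mul_pos hqpos htpos))
  -- ‖(θ-1) + Q‖ = ‖Q‖
  have hsum : ‖(θ - 1) + Q‖ = ‖Q‖ := by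
    rw [Padic.add_eq_max_of_ne (ne_of_lt hθq), max_eq_right hθq.le]
  -- ‖y - ((θ-1) + Q)‖ = ‖Q‖
  have hylt : ‖y‖ < ‖(θ - 1) + Q‖ := by
    rw [hsum, hny]
    calc ‖Q‖ * ‖θ - 1‖ < ‖Q‖ * 1 := by
          exact mul_lt_mul_of_pos_left (lt_trans hθq hq) hqpos
      _ = ‖Q‖ := mul_one _
  have hdiff : ‖y - ((θ - 1) + Q)‖ = ‖Q‖ := by
    have hne' : ‖y‖ ≠ ‖-((θ - 1) + Q)‖ := by rw [norm_neg]; exact ne_of_lt hylt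
    rw [sub_eq_add_neg, Padic.add_eq_max_of_ne hne', norm_neg, hsum]
    exact max_eq_right (hsum ▸ hylt).le
  set u : ℚ_[p] := (θ - 1) * (y - (θ - 1) - Q) / y with hu
  have hu1 : ‖u‖ = 1 := by
    rw [hu, norm_div, norm_mul]
    have : y - (θ - 1) - Q = y - ((θ - 1) + Q) := by ring
    rw [this, hdiff, hny]
    rw [mul_comm ‖Q‖ ‖θ - 1‖]
    exact div_self (ne_of_gt (mul_pos htpos hqpos))
  have hkey : ‖u ^ 2 + 3 * u + 3‖ = 1 := key_unit_lemma p hp5 hp3 u hu1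
  have hiden : ((θ * x + Q - 1) / (x + θ + Q - 2)) ^ 3 - 1 = u * (u ^ 2 + 3 * u + 3) := by
    rw [hu, ← hy]
    field_simp
    ring
  rw [hiden, norm_mul, hu1, hkey, one_mul]
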